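/- Let ε ∈ (0, 1/2) with 1/ε ∈ ℕ, let V be a random vector in ℝ^d whose coordinates are independent and uniformly distributed on the finite set A = {0, 2ε, 4ε, …, 1} (which has 1/(2ε) + 1 elements), and let Z ~ U([−ε; ε]^d) be independent of V. Then V + Z is uniformly distributed on [−ε; 1 + ε]^d, and I(V; V + Z) = d·log(1 + 1/(2ε)). -/

import Mathlib

open MeasureTheory ProbabilityTheory Real Set
open scoped ENNReal NNReal ProbabilityTheory

noncomputable section

/-- Differential entropy `h(X) = -E[log p_X(X)]` of a random vector `X`, where `p_X` denotes
the density (Radon-Nikodym derivative) of the law of `X` w.r.t. the reference volume measure. -/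
def dEnt {Ω E : Type*} [MeasurableSpace Ω] [MeasureSpace E]
    (P : Measure Ω) (X : Ω → E) : ℝ :=
  - ∫ e, Real.log (((P.map X).rnDeriv volume e).toReal) ∂(P.map X)

/-- Conditional differential entropy `h(X | Y) = h(X, Y) - h(Y)`. -/
def condEnt {Ω E F : Type*} [MeasurableSpace Ω] [MeasureSpace E] [MeasureSpace F]
    (P : Measure Ω) (X : Ω → E) (Y : Ω → F) : ℝ :=
  dEnt P (fun ω => (X ω, Y ω)) - dEnt P Y

/-- Mutual information `I(X; Y) = h(Y) - h(Y | X)`. -/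
def MI {Ω E F : Type*} [MeasurableSpace Ω] [MeasureSpace E] [MeasureSpace F]
    (P : Measure Ω) (X : Ω → E) (Y : Ω → F) : ℝ :=
  dEnt P Y - condEnt P Y X

/-- Conditional mutual information `I(X; Y | W) = h(X | W) - h(X | Y, W)`. -/
def condMI {Ω E F G : Type*} [MeasurableSpace Ω] [MeasureSpace E] [MeasureSpace F]
    [MeasureSpace G] (P : Measure Ω) (X : Ω → E) (Y : Ω → F) (W : Ω → G) : ℝ :=
  condEnt P X W - condEnt P X (fun ω => (Y ω, W ω))

/-- Kullback–Leibler divergence `D_KL(μ ‖ ν) = ∫ log (dμ/dν) dμ`. -/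
def KL {E : Type*} [MeasurableSpace E] (μ ν : Measure E) : ℝ :=
  ∫ x, Real.log ((μ.rnDeriv ν x).toReal) ∂μ

/-- Density of the Gaussian distribution `N(m, S)` on `ℝ^d`. -/
def gaussDensity (d : ℕ) (m : Fin d → ℝ) (S : Matrix (Fin d) (Fin d) ℝ) (x : Fin d → ℝ) : ℝ :=
  (Real.sqrt ((2 * π) ^ d * S.det))⁻¹ *
    Real.exp (-(1 / 2) * ∑ i, ∑ j, (x i - m i) * S⁻¹ i j * (x j - m j))

/-- The Gaussian distribution `N(m, S)` on `ℝ^d`. -/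
def gaussMeasure (d : ℕ) (m : Fin d → ℝ) (S : Matrix (Fin d) (Fin d) ℝ) :
    Measure (Fin d → ℝ) :=
  volume.withDensity fun x => ENNReal.ofReal (gaussDensity d m S x)

/-- The centered isotropic Gaussian distribution `N(0, c·I)` on `ℝ^d`. -/
def isoGauss (d : ℕ) (c : ℝ) : Measure (Fin d → ℝ) :=
  volume.withDensity fun x =>
    ENNReal.ofReal ((2 * π * c) ^ (-(d : ℝ) / 2) * Real.exp (-(∑ i, (x i) ^ 2) / (2 * c)))

/-- The uniform distribution on a set `S` (of positive finite volume). -/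
def unif {E : Type*} [MeasureSpace E] (S : Set E) : Measure E :=
  (volume S)⁻¹ • volume.restrict S

/-- The cube `[a, b]^d ⊆ ℝ^d`. -/
def cube (d : ℕ) (a b : ℝ) : Set (Fin d → ℝ) :=
  Set.univ.pi fun _ => Set.Icc a b

/-- The uniform distribution on the finite set `A = {0, 2ε, 4ε, …, 1} ⊆ ℝ`
consisting of `1/(2ε) + 1` points. -/
def discUnif (ε : ℝ) : Measure ℝ :=
  (ENNReal.ofReal (1 / (2 * ε) + 1))⁻¹ •
    Measure.sum (fun k : ℕ => if (k : ℝ) ≤ 1 / (2 * ε) then Measure.dirac (2 * ε * k) else 0)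

/-- The encoder `f` is weakly invariant to the data augmentation `X → X'` if there is a
measurable `g` with `f(X) = g(f(X)) = g(f(X'))` almost surely. -/
def WeakInv {Ω α E : Type*} [MeasurableSpace Ω] [MeasurableSpace E]
    (P : Measure Ω) (f : α → E) (X X' : Ω → α) : Prop :=
  ∃ g : E → E, Measurable g ∧
    ∀ᵐ ω ∂P, f (X ω) = g (f (X ω)) ∧ f (X ω) = g (f (X' ω))


theorem lintegral_pi_prod {d : ℕ} (μ : Fin d → Measure ℝ) [∀ i, SigmaFinite (μ i)]
    (f : Fin d → ℝ → ℝ≥0∞) (hf : ∀ i, Measurable (f i)) :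
    ∫⁻ x, ∏ i, f i (x i) ∂Measure.pi μ = ∏ i, ∫⁻ t, f i t ∂μ i := by
  induction d with
  | zero => simp
  | succ n ih =>
    have h := (measurePreserving_piFinSuccAbove μ 0).symm
    rw [← h.lintegral_comp (by exact Finset.measurable_prod _ fun i _ => (hf i).comp (measurable_pi_apply i))]
    simp_rw [MeasurableEquiv.piFinSuccAbove_symm_apply, Fin.insertNthEquiv,
      Fin.prod_univ_succ, Fin.insertNth_zero, Equiv.coe_fn_mk, Fin.cons_succ, Fin.zero_succAbove,
      Fin.cons_zero, cast_eq]
    rw [lintegral_prod_mul (f := f 0) (g := fun y : Fin n → ℝ => ∏ x : Fin n, f x.succ (y x))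
      (hf 0).aemeasurable
      (Finset.measurable_prod _ fun i _ => (hf _).comp (measurable_pi_apply i)).aemeasurable]
    rw [ih (fun j => μ (Fin.succ j)) (fun j => f (Fin.succ j)) (fun j => hf _)]

theorem unif_apply {E : Type*} [MeasureSpace E] (S : Set E) {s : Set E}
    (hs : MeasurableSet s) : unif S s = (volume S)⁻¹ * volume (s ∩ S) := by
  rw [unif, Measure.smul_apply, Measure.restrict_apply hs, smul_eq_mul]

theorem discUnif_lintegral_gen {ε : ℝ} {N : ℕ}
    (hcond : ∀ k : ℕ, ((k : ℝ) ≤ 1 / (2 * ε) ↔ k ≤ N)) (f : ℝ → ℝ≥0∞) :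
    ∫⁻ x, f x ∂discUnif ε
      = (ENNReal.ofReal (1 / (2 * ε) + 1))⁻¹ * ∑ k ∈ Finset.range (N + 1), f (2 * ε * k) := by
  rw [discUnif, lintegral_smul_measure, lintegral_sum_measure]
  congr 1
  have : ∀ k : ℕ, (∫⁻ x, f x ∂(if (k : ℝ) ≤ 1 / (2*ε) then Measure.dirac (2 * ε * k) else 0))
      = (if k ∈ Finset.range (N+1) then f (2 * ε * k) else 0) := by
    intro k
    by_cases hk : (k : ℝ) ≤ 1 / (2 * ε)
    · rw [if_pos hk, if_pos, lintegral_dirac]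
      simp [Nat.lt_succ_iff, (hcond k).mp hk]
    · rw [if_neg hk, if_neg, lintegral_zero_measure]
      simp only [Finset.mem_range, Nat.lt_succ_iff]
      exact fun h => hk ((hcond k).mpr h)
  rw [tsum_congr this, tsum_eq_sum (s := Finset.range (N+1)) (fun b hb => if_neg hb)]
  exact Finset.sum_congr rfl fun k hk => if_pos hk

theorem discUnif_lintegral {ε : ℝ} {n : ℕ} (hε : 0 < ε) (hn : 2 * ε * n = 1)
    (f : ℝ → ℝ≥0∞) :
    ∫⁻ x, f x ∂discUnif ε = ((n : ℝ≥0∞) + 1)⁻¹ * ∑ k ∈ Finset.range (n + 1), f (2 * ε * k) := by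
  have h2ε : (0:ℝ) < 2 * ε := by linarith
  have h1 : 1 / (2 * ε) = (n : ℝ) := by
    field_simp
    linarith
  rw [discUnif_lintegral_gen (N := n) (fun k => by rw [h1]; exact_mod_cast Iff.rfl) f]
  congr 2
  rw [h1, show (n : ℝ) + 1 = ((n + 1 : ℕ) : ℝ) by push_cast; ring, ENNReal.ofReal_natCast]
  push_cast
  ring

theorem blocks_union {ε : ℝ} (hε : 0 < ε) (N : ℕ) :
    (⋃ k ∈ Finset.range (N + 1), Ico (2 * ε * k - ε) (2 * ε * k + ε))
      = Ico (-ε) (2 * ε * N + ε) := by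
  induction N with
  | zero =>
    simp only [Finset.range_one, Finset.mem_singleton, Nat.cast_zero]
    norm_num
  | succ m ih =>
    rw [Finset.range_add_one, Finset.set_biUnion_insert, ih, union_comm]
    have h1 : 2 * ε * (m + 1 : ℕ) - ε = 2 * ε * m + ε := by push_cast; ring
    rw [h1]
    rw [Set.Ico_union_Ico_eq_Ico (by nlinarith [mul_nonneg (le_of_lt hε) (Nat.cast_nonneg m)]) (by push_cast; nlinarith)]

theorem blocks_disjoint {ε : ℝ} (hε : 0 < ε) (N : ℕ) :
    Set.PairwiseDisjoint (↑(Finset.range (N + 1)) : Set ℕ)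
      (fun k : ℕ => Ico (2 * ε * k - ε) (2 * ε * k + ε)) := by
  have key : ∀ j k : ℕ, j < k →
      Disjoint (Ico (2 * ε * j - ε) (2 * ε * j + ε)) (Ico (2 * ε * k - ε) (2 * ε * k + ε)) := by
    intro j k hjk
    rw [Set.Ico_disjoint_Ico]
    have hj1 : (j : ℝ) + 1 ≤ (k : ℝ) := by exact_mod_cast hjk
    calc min (2 * ε * j + ε) (2 * ε * k + ε) ≤ 2 * ε * j + ε := min_le_left _ _
      _ ≤ 2 * ε * k - ε := by nlinarith
      _ ≤ max (2 * ε * j - ε) (2 * ε * k - ε) := le_max_right _ _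
  intro j _ k _ hjk
  rcases lt_or_gt_of_ne hjk with h | h
  · exact key j k h
  · exact (key k j h).symm

theorem sum_blocks_vol {ε : ℝ} {n : ℕ} (hε : 0 < ε) (hn : 2 * ε * n = 1) {s : Set ℝ}
    (hs : MeasurableSet s) :
    ∑ k ∈ Finset.range (n + 1), volume (s ∩ Icc (2 * ε * k - ε) (2 * ε * k + ε))
      = volume (s ∩ Icc (-ε) (1 + ε)) := by
  have hIccIco : ∀ a b : ℝ, volume (s ∩ Icc a b) = volume (s ∩ Ico a b) := by
    intro a b
    exact measure_congr (ae_eq_set_inter (ae_eq_refl s) Ico_ae_eq_Icc.symm)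
  calc ∑ k ∈ Finset.range (n + 1), volume (s ∩ Icc (2 * ε * k - ε) (2 * ε * k + ε))
      = ∑ k ∈ Finset.range (n + 1), volume (s ∩ Ico (2 * ε * k - ε) (2 * ε * k + ε)) := by
        exact Finset.sum_congr rfl fun k _ => hIccIco _ _
    _ = volume (⋃ k ∈ Finset.range (n + 1), s ∩ Ico (2 * ε * k - ε) (2 * ε * k + ε)) := by
        rw [measure_biUnion_finset
          (fun j hj k hk hjk => ((blocks_disjoint hε n) hj hk hjk).mono inter_subset_right inter_subset_right)
          (fun k _ => hs.inter measurableSet_Ico)]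
    _ = volume (s ∩ Ico (-ε) (1 + ε)) := by
        rw [← Set.inter_iUnion₂, blocks_union hε n, hn]
    _ = volume (s ∩ Icc (-ε) (1 + ε)) := (hIccIco _ _).symm

theorem unif_Icc_shift {ε : ℝ} (hε : 0 < ε) (c : ℝ) {s : Set ℝ} (hs : MeasurableSet s) :
    unif (Icc (-ε) ε) ((fun t => c + t) ⁻¹' s)
      = (ENNReal.ofReal (2 * ε))⁻¹ * volume (s ∩ Icc (c - ε) (c + ε)) := by
  rw [unif_apply _ (hs.preimage (measurable_const_add c))]
  have h1 : ((fun t => c + t) ⁻¹' s) ∩ Icc (-ε) ε = (fun t => c + t) ⁻¹' (s ∩ Icc (c - ε) (c + ε)) := by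
    ext t
    simp only [mem_inter_iff, mem_preimage, mem_Icc]
    constructor
    · rintro ⟨h, h2, h3⟩; exact ⟨h, by linarith, by linarith⟩
    · rintro ⟨h, h2, h3⟩; exact ⟨h, by linarith, by linarith⟩
  rw [h1, measure_preimage_add, Real.volume_Icc]
  norm_num
  ring_nf
  rw [ENNReal.ofReal_mul hε.le, ENNReal.ofReal_ofNat]
  exact mul_comm _ _

theorem conv_one_dim {ε : ℝ} {n : ℕ} (hε : 0 < ε) (hn : 2 * ε * n = 1) {s : Set ℝ}
    (hs : MeasurableSet s) :
    ∫⁻ v, unif (Icc (-ε) ε) ((fun t => v + t) ⁻¹' s) ∂discUnif ε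
      = unif (Icc (-ε) (1 + ε)) s := by
  rw [discUnif_lintegral hε hn]
  have h2ε : (0:ℝ) < 2 * ε := by linarith
  calc ((n : ℝ≥0∞) + 1)⁻¹ * ∑ k ∈ Finset.range (n + 1),
        unif (Icc (-ε) ε) ((fun t => (2 * ε * k) + t) ⁻¹' s)
      = ((n : ℝ≥0∞) + 1)⁻¹ * ((ENNReal.ofReal (2 * ε))⁻¹ *
          ∑ k ∈ Finset.range (n + 1), volume (s ∩ Icc (2 * ε * k - ε) (2 * ε * k + ε))) := by
        congr 1
        rw [Finset.mul_sum]
        exact Finset.sum_congr rfl fun k _ => unif_Icc_shift hε _ hs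
    _ = (((n : ℝ≥0∞) + 1) * ENNReal.ofReal (2 * ε))⁻¹ * volume (s ∩ Icc (-ε) (1 + ε)) := by
        rw [sum_blocks_vol hε hn hs, ← mul_assoc, ENNReal.mul_inv (Or.inr ENNReal.ofReal_ne_top)
          (Or.inl (by simp))]
    _ = unif (Icc (-ε) (1 + ε)) s := by
        rw [unif_apply _ hs, Real.volume_Icc]
        congr 2
        rw [show (n : ℝ≥0∞) + 1 = ENNReal.ofReal ((n : ℝ) + 1) by
          rw [show ((n:ℝ) + 1) = ((n + 1 : ℕ) : ℝ) by push_cast; ring, ENNReal.ofReal_natCast]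
          push_cast; ring]
        rw [← ENNReal.ofReal_mul (by positivity)]
        congr 1
        nlinarith

theorem unif_prob {E : Type*} [MeasureSpace E] {S : Set E} (h0 : volume S ≠ 0)
    (ht : volume S ≠ ⊤) : IsProbabilityMeasure (unif S) := by
  constructor
  rw [unif_apply _ MeasurableSet.univ, Set.univ_inter]
  exact ENNReal.inv_mul_cancel h0 ht

theorem discUnif_prob {ε : ℝ} {n : ℕ} (hε : 0 < ε) (hn : 2 * ε * n = 1) :
    IsProbabilityMeasure (discUnif ε) := by
  constructor
  rw [← lintegral_one, discUnif_lintegral hε hn]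
  simp only [Finset.sum_const, Finset.card_range, nsmul_eq_mul, mul_one]
  rw [show ((n + 1 : ℕ) : ℝ≥0∞) = (n : ℝ≥0∞) + 1 by push_cast; ring]
  exact ENNReal.inv_mul_cancel (by simp) (by simp)

theorem unif_cube_eq_pi {d : ℕ} {a b : ℝ} (hab : a < b) :
    unif (cube d a b) = Measure.pi (fun _ : Fin d => unif (Icc a b)) := by
  have hvol : volume (Icc a b) ≠ 0 := by
    rw [Real.volume_Icc]; simp only [ne_eq, ENNReal.ofReal_eq_zero, not_le]; linarith
  haveI : IsProbabilityMeasure (unif (Icc a b)) := unif_prob hvol (by simp [Real.volume_Icc])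
  refine (Measure.pi_eq fun s hs => ?_).symm
  calc unif (cube d a b) (Set.pi univ s)
      = (volume (Set.univ.pi fun _ : Fin d => Icc a b))⁻¹
          * volume ((Set.pi univ s) ∩ Set.univ.pi fun _ : Fin d => Icc a b) := by
        rw [unif_apply _ (MeasurableSet.pi countable_univ fun i _ => (hs i))]; rfl
    _ = (∏ _i : Fin d, volume (Icc a b))⁻¹ * ∏ i : Fin d, volume (s i ∩ Icc a b) := by
        rw [← Set.pi_inter_distrib, volume_pi_pi, volume_pi_pi]
    _ = ∏ i : Fin d, ((volume (Icc a b))⁻¹ * volume (s i ∩ Icc a b)) := by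
        rw [Finset.prod_mul_distrib, Finset.prod_const, Finset.prod_const, ← ENNReal.inv_pow]
    _ = ∏ i : Fin d, unif (Icc a b) (s i) :=
        Finset.prod_congr rfl fun i _ => (unif_apply _ (hs i)).symm

theorem map_add_eq_unif {Ω : Type*} [MeasurableSpace Ω] (P : Measure Ω) [IsProbabilityMeasure P]
    {d : ℕ} (V Z : Ω → (Fin d → ℝ)) (hV : Measurable V) (hZ : Measurable Z)
    {ε : ℝ} {n : ℕ} (hε : 0 < ε) (hn : 2 * ε * n = 1)
    (hVlaw : P.map V = Measure.pi fun _ : Fin d => discUnif ε)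
    (hZlaw : P.map Z = unif (cube d (-ε) ε))
    (hindep : IndepFun V Z P) :
    P.map (fun ω => V ω + Z ω) = unif (cube d (-ε) (1 + ε)) := by
  haveI : IsProbabilityMeasure (discUnif ε) := discUnif_prob hε hn
  haveI : IsProbabilityMeasure (unif (Icc (-ε) ε)) :=
    unif_prob (by rw [Real.volume_Icc]; simp only [ne_eq, ENNReal.ofReal_eq_zero, not_le]; linarith)
      (by simp [Real.volume_Icc])
  have hmadd : Measurable (fun p : (Fin d → ℝ) × (Fin d → ℝ) => p.1 + p.2) :=
    measurable_fst.add measurable_snd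
  have hpair := (indepFun_iff_map_prod_eq_prod_map_map hV.aemeasurable hZ.aemeasurable).mp hindep
  have hcomp : P.map (fun ω => V ω + Z ω) = ((P.map V).prod (P.map Z)).map (fun p => p.1 + p.2) := by
    rw [← hpair, Measure.map_map hmadd (hV.prodMk hZ)]
    rfl
  rw [hcomp, hVlaw, hZlaw, unif_cube_eq_pi (by linarith),
    unif_cube_eq_pi (show -ε < 1 + ε by linarith)]
  haveI : IsProbabilityMeasure (unif (Icc (-ε) (1 + ε))) :=
    unif_prob (by rw [Real.volume_Icc]; simp only [ne_eq, ENNReal.ofReal_eq_zero, not_le]; linarith)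
      (by simp [Real.volume_Icc])
  refine (Measure.pi_eq fun s hs => ?_).symm
  have hset : MeasurableSet (Set.pi univ s) := MeasurableSet.pi countable_univ fun i _ => hs i
  rw [Measure.map_apply hmadd hset, Measure.prod_apply (hmadd hset)]
  have hkey : ∀ x : Fin d → ℝ, (Prod.mk x ⁻¹' ((fun p : (Fin d → ℝ) × (Fin d → ℝ) => p.1 + p.2) ⁻¹' Set.pi univ s))
      = Set.pi univ (fun i => (fun t => x i + t) ⁻¹' s i) := by
    intro x
    ext y
    simp [Set.mem_pi, Pi.add_apply]
  simp_rw [hkey, Measure.pi_pi]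
  rw [lintegral_pi_prod _ (fun i => fun t => unif (Icc (-ε) ε) ((fun y => t + y) ⁻¹' s i))
    (fun i => measurable_measure_prodMk_left ((hs i).preimage (measurable_fst.add measurable_snd)))]
  exact Finset.prod_congr rfl fun i _ => conv_one_dim hε hn (hs i)

theorem dEnt_unif {Ω E : Type*} [MeasurableSpace Ω] [MeasureSpace E]
    [SigmaFinite (volume : Measure E)]
    (P : Measure Ω) (X : Ω → E) {S : Set E} (hS : MeasurableSet S)
    (h0 : volume S ≠ 0) (ht : volume S ≠ ⊤) (hmap : P.map X = unif S) :
    dEnt P X = Real.log (volume S).toReal := by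
  haveI : IsProbabilityMeasure (unif S) := unif_prob h0 ht
  have hwd : unif S = volume.withDensity (S.indicator fun _ => (volume S)⁻¹) := by
    rw [withDensity_indicator hS, withDensity_const]; rfl
  have hrn : (unif S).rnDeriv volume =ᵐ[volume] S.indicator fun _ => (volume S)⁻¹ := by
    rw [hwd]; exact Measure.rnDeriv_withDensity volume (measurable_const.indicator hS)
  have hac : unif S ≪ volume := by
    rw [unif]
    exact (Measure.absolutelyContinuous_of_le Measure.restrict_le_self).smul_left _
  have hmem : ∀ᵐ e ∂(unif S), e ∈ S := by
    rw [unif]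
    exact Measure.ae_smul_measure (ae_restrict_mem hS) _
  have h1 : ∀ᵐ e ∂(unif S), Real.log (((unif S).rnDeriv volume e).toReal)
      = Real.log (((volume S)⁻¹).toReal) := by
    filter_upwards [hac.ae_le hrn, hmem] with e he hm
    rw [he, indicator_of_mem hm]
  rw [dEnt, hmap, integral_congr_ae h1, integral_const, probReal_univ]
  simp only [ENNReal.toReal_one, one_smul, ENNReal.toReal_inv, Real.log_inv, neg_neg]

theorem hvc' {d : ℕ} {a b : ℝ} (h : a ≤ b) :
    volume (cube d a b) = (ENNReal.ofReal (b - a)) ^ d := by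
  rw [cube, volume_pi_pi]
  simp [Real.volume_Icc]

theorem stmt15_aux {Ω : Type*} [MeasurableSpace Ω] (P : Measure Ω) [IsProbabilityMeasure P]
    {d : ℕ} (V Z : Ω → (Fin d → ℝ)) (hV : Measurable V) (hZ : Measurable Z)
    (ε : ℝ) (hε0 : 0 < ε) (hε2 : ε < 1 / 2) (hεnat : ∃ m : ℕ, (m : ℝ) = 1 / ε)
    (hVlaw : P.map V = Measure.pi fun _ : Fin d => discUnif ε)
    (hZlaw : P.map Z = unif (cube d (-ε) ε))
    (hindep : IndepFun V Z P) :
    P.map (fun ω => V ω + Z ω) = unif (cube d (-ε) (1 + ε)) ∧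
    dEnt P (fun ω => V ω + Z ω) - dEnt P Z = (d : ℝ) * Real.log (1 + 1 / (2 * ε)) := by
  obtain ⟨m, hm⟩ := hεnat
  have hεm : ε * m = 1 := by
    rw [hm]
    field_simp
  have hcube1 : MeasurableSet (cube d (-ε) (1 + ε)) :=
    MeasurableSet.pi countable_univ fun i _ => measurableSet_Icc
  have hcubeε : MeasurableSet (cube d (-ε) ε) :=
    MeasurableSet.pi countable_univ fun i _ => measurableSet_Icc
  have hv1 : volume (cube d (-ε) (1 + ε)) = (ENNReal.ofReal (1 + 2 * ε)) ^ d := by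
    rw [hvc' (by linarith)]
    ring_nf
  have hvε : volume (cube d (-ε) ε) = (ENNReal.ofReal (2 * ε)) ^ d := by
    rw [hvc' (by linarith)]
    ring_nf
  have hne1 : volume (cube d (-ε) (1 + ε)) ≠ 0 := by
    rw [hv1]; exact pow_ne_zero _ (by simp; linarith)
  have hnt1 : volume (cube d (-ε) (1 + ε)) ≠ ⊤ := by
    rw [hv1]; exact ENNReal.pow_ne_top ENNReal.ofReal_ne_top
  have hneε : volume (cube d (-ε) ε) ≠ 0 := by
    rw [hvε]; exact pow_ne_zero _ (by simp; linarith)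
  have hntε : volume (cube d (-ε) ε) ≠ ⊤ := by
    rw [hvε]; exact ENNReal.pow_ne_top ENNReal.ofReal_ne_top
  rcases Nat.even_or_odd m with ⟨n, hmn⟩ | hodd
  · -- even case
    have hcast : (m : ℝ) = (n : ℝ) + (n : ℝ) := by exact_mod_cast congrArg (Nat.cast : ℕ → ℝ) hmn
    have hn : 2 * ε * n = 1 := by nlinarith
    have hpart1 := map_add_eq_unif P V Z hV hZ hε0 hn hVlaw hZlaw hindep
    refine ⟨hpart1, ?_⟩
    rw [dEnt_unif P _ hcube1 hne1 hnt1 hpart1, dEnt_unif P _ hcubeε hneε hntε hZlaw]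
    rw [hv1, hvε, ENNReal.toReal_pow, ENNReal.toReal_pow,
      ENNReal.toReal_ofReal (by linarith), ENNReal.toReal_ofReal (by linarith),
      Real.log_pow, Real.log_pow, ← mul_sub]
    congr 1
    rw [show 1 + 1 / (2 * ε) = (1 + 2 * ε) / (2 * ε) by field_simp; ring,
      Real.log_div (by linarith) (by linarith)]
  · -- odd case
    obtain ⟨j, hj⟩ := hodd
    have hmr : (m : ℝ) = 2 * (j : ℝ) + 1 := by exact_mod_cast congrArg (Nat.cast : ℕ → ℝ) hj
    have h12 : 1 / (2 * ε) = (j : ℝ) + 1 / 2 := by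
      rw [show 1 / (2 * ε) = (1 / ε) / 2 by ring, ← hm, hmr]
      ring
    have hcond : ∀ k : ℕ, ((k : ℝ) ≤ 1 / (2 * ε) ↔ k ≤ j) := by
      intro k
      rw [h12]
      constructor
      · intro h
        by_contra hc
        have : (j : ℝ) + 1 ≤ (k : ℝ) := by exact_mod_cast Nat.succ_le_of_lt (Nat.lt_of_not_le hc)
        linarith
      · intro h
        have : (k : ℝ) ≤ (j : ℝ) := by exact_mod_cast h
        linarith
    have hmass : discUnif ε univ = (ENNReal.ofReal ((j : ℝ) + 3 / 2))⁻¹ * ((j : ℕ) + 1 : ℕ) := by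
      rw [← lintegral_one, discUnif_lintegral_gen hcond]
      simp only [Finset.sum_const, Finset.card_range, nsmul_eq_mul, mul_one]
      congr 2
      rw [h12]; ring
    have hmasslt : discUnif ε univ < 1 := by
      rw [hmass]
      have ha0 : (ENNReal.ofReal ((j : ℝ) + 3 / 2)) ≠ 0 := by
        simp only [ne_eq, ENNReal.ofReal_eq_zero, not_le]
        positivity
      have hat : (ENNReal.ofReal ((j : ℝ) + 3 / 2)) ≠ ⊤ := ENNReal.ofReal_ne_top
      have hb : (((j : ℕ) + 1 : ℕ) : ℝ≥0∞) = ENNReal.ofReal ((j : ℝ) + 1) := by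
        rw [show (j : ℝ) + 1 = ((j + 1 : ℕ) : ℝ) by push_cast; ring, ENNReal.ofReal_natCast]
      rw [hb]
      calc (ENNReal.ofReal ((j : ℝ) + 3 / 2))⁻¹ * ENNReal.ofReal ((j : ℝ) + 1)
          < (ENNReal.ofReal ((j : ℝ) + 3 / 2))⁻¹ * ENNReal.ofReal ((j : ℝ) + 3 / 2) := by
            rw [ENNReal.mul_lt_mul_iff_right (ENNReal.inv_ne_zero.mpr hat) (ENNReal.inv_ne_top.mpr ha0)]
            exact ENNReal.ofReal_lt_ofReal_iff_of_nonneg (by positivity) |>.mpr (by linarith)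
        _ = 1 := ENNReal.inv_mul_cancel ha0 hat
    haveI : IsFiniteMeasure (discUnif ε) := ⟨hmasslt.trans_le le_top⟩
    rcases Nat.eq_zero_or_pos d with rfl | hd
    · -- d = 0
      haveI : Subsingleton (Fin 0 → ℝ) := ⟨fun x y => funext fun i => absurd i.2 (by simp)⟩
      have huniq : ∀ (μ ν : Measure (Fin 0 → ℝ)), IsProbabilityMeasure μ →
          IsProbabilityMeasure ν → μ = ν := by
        intro μ ν hμ hν
        ext s hs
        rcases eq_empty_or_nonempty s with rfl | ⟨x, hx⟩
        · simp
        · have : s = univ := eq_univ_of_forall fun y => (Subsingleton.elim x y) ▸ hx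
          rw [this, hμ.measure_univ, hν.measure_univ]
      haveI hprob1 : IsProbabilityMeasure (unif (cube 0 (-ε) (1 + ε))) := unif_prob hne1 hnt1
      haveI hprobm : IsProbabilityMeasure (P.map (fun ω => V ω + Z ω)) :=
        Measure.isProbabilityMeasure_map (hV.add hZ).aemeasurable
      have hpart1 : P.map (fun ω => V ω + Z ω) = unif (cube 0 (-ε) (1 + ε)) :=
        huniq _ _ hprobm hprob1
      refine ⟨hpart1, ?_⟩
      rw [dEnt_unif P _ hcube1 hne1 hnt1 hpart1, dEnt_unif P _ hcubeε hneε hntε hZlaw]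
      rw [hv1, hvε]
      norm_num
    · -- d ≥ 1 : contradiction
      exfalso
      haveI := Measure.isProbabilityMeasure_map (μ := P) hV.aemeasurable
      have h1 : (1 : ℝ≥0∞) = (Measure.pi fun _ : Fin d => discUnif ε) univ := by
        rw [← hVlaw]
        exact measure_univ.symm
      rw [Measure.pi_univ, Finset.prod_const, Finset.card_univ, Fintype.card_fin] at h1
      have h2 : (discUnif ε univ) ^ d < 1 := pow_lt_one₀ zero_le hmasslt hd.ne'
      exact absurd h1.symm (ne_of_lt h2)

/-- Let `ε ∈ (0, 1/2)` with `1/ε ∈ ℕ`, let `V` have independent coordinates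
uniformly distributed on the finite set `A = {0, 2ε, 4ε, …, 1}`, and let `Z ~ U([-ε, ε]^d)` be
independent of `V`. Then `V + Z ~ U([-ε, 1+ε]^d)` and
`I(V; V + Z) = h(V + Z) - h(Z) = d·log(1 + 1/(2ε))`. -/
theorem stmt15 {Ω : Type*} [MeasurableSpace Ω] (P : Measure Ω) [IsProbabilityMeasure P]
    {d : ℕ} (V Z : Ω → (Fin d → ℝ)) (hV : Measurable V) (hZ : Measurable Z)
    (ε : ℝ) (hε0 : 0 < ε) (hε2 : ε < 1 / 2) (hεnat : ∃ m : ℕ, (m : ℝ) = 1 / ε)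
    (hVlaw : P.map V = Measure.pi fun _ : Fin d => discUnif ε)
    (hZlaw : P.map Z = unif (cube d (-ε) ε))
    (hindep : IndepFun V Z P) :
    P.map (fun ω => V ω + Z ω) = unif (cube d (-ε) (1 + ε)) ∧
    dEnt P (fun ω => V ω + Z ω) - dEnt P Z = (d : ℝ) * Real.log (1 + 1 / (2 * ε)) := by
  exact stmt15_aux P V Z hV hZ ε hε0 hε2 hεnat hVlaw hZlaw hindep

end
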